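/- Let n ≥ 1, let h : Fin n → ℝ with Σ_i h(i)² > 0, and let T : Fin n → Fin n → Fin n → ℝ be totally symmetric. If equality (Σ_i h(i)²)·(Σ_{i,j,k} T(i,j,k)²) = Σ_k (Σ_i h(i)·T(i,i,k))² holds, then: (a) T(i,i,j) = 0 for all i ≠ j; (b) T(i,j,k) = 0 whenever i, j, k are pairwise distinct; and (c) h(i)·T(s,s,k) = h(s)·T(i,i,k) for all i, s, k. -/

import Mathlib

open Finset


lemma lagrange_id (n : ℕ) (u v : Fin n → ℝ) :
    ∑ i, ∑ j, (u i * v j - u j * v i) ^ 2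
    = 2 * ((∑ i, u i ^ 2) * (∑ i, v i ^ 2)) - 2 * (∑ i, u i * v i) ^ 2 := by
  have key : ∑ i, ∑ j, (u i * v j - u j * v i) ^ 2
      = ∑ i, ∑ j, (u i ^ 2 * v j ^ 2 + v i ^ 2 * u j ^ 2 - 2 * ((u i * v i) * (u j * v j))) := by
    refine sum_congr rfl fun i _ => sum_congr rfl fun j _ => by ring
  rw [key]
  simp only [sum_sub_distrib, sum_add_distrib, ← mul_sum, ← sum_mul]
  ring

/-- Characterization of the equality case `|∇A|² = |∇|A||²`: if `h : Fin n → ℝ`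
has `Σ_i h(i)² > 0`, `T` is a totally symmetric 3-tensor (total symmetry is
expressed by invariance under the two transpositions swapping the first two and
the last two indices, which generate all permutations of the three indices),
and `(Σ_i h(i)²)·(Σ_{i,j,k} T(i,j,k)²) = Σ_k (Σ_i h(i)·T(i,i,k))²`, then
(a) `T(i,i,j) = 0` for all `i ≠ j`;
(b) `T(i,j,k) = 0` whenever `i, j, k` are pairwise distinct;
(c) `h(i)·T(s,s,k) = h(s)·T(i,i,k)` for all `i, s, k`. -/
theorem equality_case_characterization (n : ℕ) (hn : 1 ≤ n)
    (h : Fin n → ℝ) (hpos : 0 < ∑ i, h i ^ 2)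
    (T : Fin n → Fin n → Fin n → ℝ)
    (hsym₁ : ∀ i j k, T i j k = T j i k)
    (hsym₂ : ∀ i j k, T i j k = T i k j)
    (heq : (∑ i, h i ^ 2) * (∑ i, ∑ j, ∑ k, T i j k ^ 2) =
      ∑ k, (∑ i, h i * T i i k) ^ 2) :
    (∀ i j, i ≠ j → T i i j = 0) ∧
    (∀ i j k, i ≠ j → j ≠ k → i ≠ k → T i j k = 0) ∧
    (∀ i s k, h i * T s s k = h s * T i i k) := by
  set S := ∑ i, h i ^ 2 with hS
  set A : Fin n → ℝ := fun k => ∑ i, h i * T i i k with hA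
  set B : Fin n → ℝ := fun k => ∑ i, T i i k ^ 2 with hB
  set C : Fin n → ℝ := fun k => ∑ i, ∑ j, T i j k ^ 2 with hC
  -- reorder sums in heq
  have hreorder : (∑ i, ∑ j, ∑ k, T i j k ^ 2) = ∑ k, C k := by
    calc ∑ i, ∑ j, ∑ k, T i j k ^ 2
        = ∑ i, ∑ k, ∑ j, T i j k ^ 2 := sum_congr rfl fun i _ => Finset.sum_comm
      _ = ∑ k, ∑ i, ∑ j, T i j k ^ 2 := Finset.sum_comm
  have heq' : ∑ k, S * C k = ∑ k, A k ^ 2 := by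
    rw [← mul_sum, ← hreorder]; exact heq
  -- per-k inequalities
  have hBC : ∀ k, B k ≤ C k := by
    intro k
    refine sum_le_sum fun i _ => ?_
    exact Finset.single_le_sum (fun j _ => sq_nonneg (T i j k)) (mem_univ i)
  have hCS : ∀ k, A k ^ 2 ≤ S * B k := by
    intro k
    have := lagrange_id n h (fun i => T i i k)
    have hnn : 0 ≤ ∑ i, ∑ j, (h i * T j j k - h j * T i i k) ^ 2 :=
      sum_nonneg fun i _ => sum_nonneg fun j _ => sq_nonneg _
    nlinarith [this, hnn]
  have hle : ∀ k ∈ univ, A k ^ 2 ≤ S * C k := fun k _ =>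
    (hCS k).trans (mul_le_mul_of_nonneg_left (hBC k) hpos.le)
  have hall : ∀ k ∈ univ, A k ^ 2 = S * C k :=
    (Finset.sum_eq_sum_iff_of_le hle).mp heq'.symm
  -- per-k equalities
  have hBCeq : ∀ k, B k = C k := by
    intro k
    have h1 := hall k (mem_univ k)
    have h2 := hCS k
    have := mul_le_mul_of_nonneg_left (hBC k) hpos.le
    have hSCB : S * B k = S * C k := le_antisymm (by nlinarith) (by nlinarith)
    exact mul_left_cancel₀ (ne_of_gt hpos) hSCB
  have hCSeq : ∀ k, A k ^ 2 = S * B k := by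
    intro k
    have h1 := hall k (mem_univ k)
    rw [h1, hBCeq k]
  -- key: off-diagonal vanishing
  have hoff : ∀ i j k, i ≠ j → T i j k = 0 := by
    intro i j k hij
    have hsum : ∑ i', (∑ j', T i' j' k ^ 2) - ∑ i', T i' i' k ^ 2 = 0 := by
      have := hBCeq k; simp only [hB, hC] at this; linarith
    have hsum' : ∑ i', ((∑ j', T i' j' k ^ 2) - T i' i' k ^ 2) = 0 := by
      rw [sum_sub_distrib]; exact hsum
    have hterm : ∀ i' ∈ univ, (∑ j', T i' j' k ^ 2) - T i' i' k ^ 2 = 0 := by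
      refine (Finset.sum_eq_zero_iff_of_nonneg fun i' _ => ?_).mp hsum'
      have := Finset.single_le_sum (fun j' _ => sq_nonneg (T i' j' k)) (mem_univ i')
      linarith
    have hi := hterm i (mem_univ i)
    have hrow : ∑ j' ∈ univ.erase i, T i j' k ^ 2 = 0 := by
      have h3 := Finset.add_sum_erase univ (fun j' => T i j' k ^ 2) (mem_univ i)
      linarith
    have := (Finset.sum_eq_zero_iff_of_nonneg fun j' _ => sq_nonneg (T i j' k)).mp hrow
      j (Finset.mem_erase.mpr ⟨hij.symm, mem_univ j⟩)
    exact pow_eq_zero_iff (two_ne_zero) |>.mp this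
  refine ⟨?_, ?_, ?_⟩
  · intro i j hij
    rw [hsym₂]
    exact hoff i j i hij
  · intro i j k hij _ _
    exact hoff i j k hij
  · intro i s k
    have hlag := lagrange_id n h (fun i => T i i k)
    have hzero : ∑ i', ∑ j', (h i' * T j' j' k - h j' * T i' i' k) ^ 2 = 0 := by
      have := hCSeq k
      simp only [hA, hB] at this
      rw [hlag]; linarith
    have h1 := (Finset.sum_eq_zero_iff_of_nonneg fun i' _ =>
      sum_nonneg fun j' _ => sq_nonneg _).mp hzero i (mem_univ i)
    have h2 := (Finset.sum_eq_zero_iff_of_nonneg fun j' _ => sq_nonneg _).mp h1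
      s (mem_univ s)
    have := pow_eq_zero_iff (two_ne_zero) |>.mp h2
    linarith
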